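/- Let d ≥ 2 and r > 0. Let Λ : ℝ^d → ℝ^d be a linear map satisfying η(Λp, Λq) = η(p, q) for all p, q ∈ ℝ^d, and suppose Λ is orthochronous in the sense that (Λp)⁰ > 0 for every p with η(p, p) < 0 and p⁰ > 0. Then the pushforward of the forward mass-shell measure μ_r^+ under Λ equals μ_r^+ (Lorentz invariance of the mass-shell measure). -/

import Mathlib

open MeasureTheory
open Matrix
open scoped RealInnerProductSpace

noncomputable section

/-- Minkowski inner product on `ℝ^{m+1}`: `η(p,q) = -p⁰q⁰ + Σ_{j=1}^{m} pʲqʲ`. -/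
def eta {m : ℕ} (p q : EuclideanSpace ℝ (Fin (m + 1))) : ℝ :=
  -(p 0 * q 0) + ∑ j : Fin m, p j.succ * q j.succ

/-- `ω_r(p⃗) = √(|p⃗|² + r)`. -/
def omg {m : ℕ} (r : ℝ) (v : EuclideanSpace ℝ (Fin m)) : ℝ :=
  Real.sqrt (‖v‖ ^ 2 + r)

/-- Embedding of `ℝ^m` onto the forward mass shell: `p⃗ ↦ (ω_r(p⃗), p⃗)`. -/
def embed {m : ℕ} (r : ℝ) (v : EuclideanSpace ℝ (Fin m)) :
    EuclideanSpace ℝ (Fin (m + 1)) :=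
  WithLp.toLp 2 (Fin.cons (omg r v) (WithLp.ofLp v) : Fin (m + 1) → ℝ)

/-- The forward mass-shell measure `μ_r^+`: pushforward under `embed r` of the measure
with density `(2 ω_r(p⃗))⁻¹` with respect to Lebesgue measure on `ℝ^m`. -/
def massShellMeasure (m : ℕ) (r : ℝ) : Measure (EuclideanSpace ℝ (Fin (m + 1))) :=
  Measure.map (embed r)
    (volume.withDensity fun v => ENNReal.ofReal ((2 * omg r v)⁻¹))

namespace MassShellAux

variable {m : ℕ}

lemma norm_sq_eq (v : EuclideanSpace ℝ (Fin m)) : ‖v‖ ^ 2 = ∑ j, v j ^ 2 := by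
  rw [EuclideanSpace.norm_eq, Real.sq_sqrt]
  · simp [sq]
  · positivity

lemma omg_sq {r : ℝ} (hr : 0 < r) (v : EuclideanSpace ℝ (Fin m)) :
    omg r v ^ 2 = ‖v‖ ^ 2 + r := by
  rw [omg, Real.sq_sqrt]; positivity

lemma omg_pos {r : ℝ} (hr : 0 < r) (v : EuclideanSpace ℝ (Fin m)) : 0 < omg r v := by
  rw [omg]; positivity

lemma embed_zero (r : ℝ) (v : EuclideanSpace ℝ (Fin m)) : embed r v 0 = omg r v := rfl

lemma embed_succ (r : ℝ) (v : EuclideanSpace ℝ (Fin m)) (j : Fin m) :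
    embed r v j.succ = v j := rfl

lemma eta_embed_self {r : ℝ} (hr : 0 < r) (v : EuclideanSpace ℝ (Fin m)) :
    eta (embed r v) (embed r v) = -r := by
  simp only [eta, embed_zero, embed_succ, ← sq, omg_sq hr, norm_sq_eq]
  ring

/-- A point on the forward shell is in the image of `embed`. -/
lemma eq_embed_of_shell {r : ℝ} (hr : 0 < r) (p : EuclideanSpace ℝ (Fin (m + 1)))
    (h : eta p p = -r) (h0 : 0 < p 0) :
    p = embed r (WithLp.toLp 2 (fun j : Fin m => p j.succ)) := by
  set w : EuclideanSpace ℝ (Fin m) := WithLp.toLp 2 (fun j : Fin m => p j.succ) with hw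
  have hω : p 0 = omg r w := by
    have h2 : p 0 ^ 2 = ‖w‖ ^ 2 + r := by
      rw [norm_sq_eq w]
      have := h
      simp only [eta, ← sq] at this
      have hwj : ∀ j, w j = p j.succ := fun j => rfl
      simp only [hwj]
      linarith
    rw [omg, ← h2, Real.sqrt_sq h0.le]
  ext i
  refine Fin.cases ?_ (fun j => ?_) i
  · exact hω
  · rfl

def bas (n : ℕ) : Module.Basis (Fin n) ℝ (EuclideanSpace ℝ (Fin n)) := PiLp.basisFun 2 ℝ (Fin n)

def Mat (Λ : EuclideanSpace ℝ (Fin (m+1)) →ₗ[ℝ] EuclideanSpace ℝ (Fin (m+1))) :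
    Matrix (Fin (m+1)) (Fin (m+1)) ℝ :=
  LinearMap.toMatrix (bas (m+1)) (bas (m+1)) Λ

lemma apply_eq (Λ : EuclideanSpace ℝ (Fin (m+1)) →ₗ[ℝ] EuclideanSpace ℝ (Fin (m+1)))
    (p : EuclideanSpace ℝ (Fin (m+1))) (i : Fin (m+1)) :
    Λ p i = ∑ j, Mat Λ i j * p j := by
  have := LinearMap.toMatrix_mulVec_repr (bas (m+1)) (bas (m+1)) Λ p
  have h2 := congrFun this i
  simp only [bas, PiLp.basisFun_repr] at h2
  rw [← h2, Mat, bas]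
  rfl

lemma mat_apply (Λ : EuclideanSpace ℝ (Fin (m+1)) →ₗ[ℝ] EuclideanSpace ℝ (Fin (m+1)))
    (i j : Fin (m+1)) : Mat Λ i j = Λ ((bas (m+1)) j) i := by
  rw [Mat, LinearMap.toMatrix_apply]; rfl

def dsgn : Fin (m+1) → ℝ := fun i => if i = 0 then -1 else 1

def J (m : ℕ) : Matrix (Fin (m+1)) (Fin (m+1)) ℝ := Matrix.diagonal dsgn

lemma eta_eq_sum (p q : EuclideanSpace ℝ (Fin (m+1))) :
    eta p q = ∑ i, dsgn i * (p i * q i) := by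
  rw [eta, Fin.sum_univ_succ]
  simp [dsgn, Fin.succ_ne_zero]

lemma bas_coord (n : ℕ) (j i : Fin n) : (bas n j) i = if i = j then 1 else 0 := by
  classical
  rw [bas, PiLp.basisFun_apply]
  simp [Pi.single_apply]

variable (Λ : EuclideanSpace ℝ (Fin (m+1)) →ₗ[ℝ] EuclideanSpace ℝ (Fin (m+1)))

lemma MtJM (hη : ∀ p q, eta (Λ p) (Λ q) = eta p q) :
    (Mat Λ)ᵀ * J m * Mat Λ = J m := by
  classical
  ext k l
  have h := hη ((bas (m+1)) k) ((bas (m+1)) l)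
  rw [eta_eq_sum, eta_eq_sum] at h
  have lhs : ((Mat Λ)ᵀ * J m * Mat Λ) k l
      = ∑ i, dsgn i * (Λ ((bas (m+1)) k) i * Λ ((bas (m+1)) l) i) := by
    rw [Matrix.mul_assoc, Matrix.mul_apply]
    refine Finset.sum_congr rfl fun i _ => ?_
    rw [J, Matrix.diagonal_mul, Matrix.transpose_apply, mat_apply, mat_apply]
    ring
  rw [lhs, h, J, Matrix.diagonal_apply]
  simp only [bas_coord]
  rcases eq_or_ne k l with rfl | hkl
  · simp
  · rw [if_neg hkl]
    rw [Finset.sum_eq_zero]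
    intro i _
    rcases eq_or_ne i k with rfl | hik
    · simp [hkl]
    · simp [hik]

lemma JJ : J m * J m = 1 := by
  rw [J, Matrix.diagonal_mul_diagonal]
  have h : (fun i => dsgn (m := m) i * dsgn i) = fun _ => (1:ℝ) := by
    funext i; by_cases h : i = 0 <;> simp [dsgn, h]
  rw [h, Matrix.diagonal_one]

lemma MJMt (hη : ∀ p q, eta (Λ p) (Λ q) = eta p q) :
    Mat Λ * J m * (Mat Λ)ᵀ = J m := by
  have h := MtJM Λ hη
  have h1 : (J m * (Mat Λ)ᵀ * J m) * Mat Λ = 1 := by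
    calc (J m * (Mat Λ)ᵀ * J m) * Mat Λ = J m * ((Mat Λ)ᵀ * J m * Mat Λ) := by
          simp only [Matrix.mul_assoc]
      _ = 1 := by rw [h, JJ]
  have h2 : Mat Λ * (J m * (Mat Λ)ᵀ * J m) = 1 := mul_eq_one_comm.mp h1
  have h3 : Mat Λ * J m * (Mat Λ)ᵀ * J m = 1 := by
    rw [← h2]; simp only [Matrix.mul_assoc]
  calc Mat Λ * J m * (Mat Λ)ᵀ = (Mat Λ * J m * (Mat Λ)ᵀ * J m) * J m := by
        rw [Matrix.mul_assoc (Mat Λ * J m * (Mat Λ)ᵀ), JJ, Matrix.mul_one]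
    _ = J m := by rw [h3, Matrix.one_mul]

lemma det_sq (hη : ∀ p q, eta (Λ p) (Λ q) = eta p q) : (Mat Λ).det ^ 2 = 1 := by
  have h := congrArg Matrix.det (MtJM Λ hη)
  rw [Matrix.det_mul, Matrix.det_mul, Matrix.det_transpose] at h
  have hJ : (J m).det ≠ 0 := by
    rw [J, Matrix.det_diagonal]
    apply Finset.prod_ne_zero_iff.mpr
    intro i _
    by_cases hi : i = 0 <;> simp [dsgn, hi]
  have h4 : (Mat Λ).det ^ 2 * (J m).det = 1 * (J m).det := by
    linear_combination h
  exact mul_right_cancel₀ hJ h4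

/-- Entry version of `MJMt`. -/
lemma MJMt_entry (hη : ∀ p q, eta (Λ p) (Λ q) = eta p q) (k l : Fin (m+1)) :
    -(Mat Λ k 0 * Mat Λ l 0) + ∑ j : Fin m, Mat Λ k j.succ * Mat Λ l j.succ
      = if k = l then dsgn k else 0 := by
  have h := congrFun (congrFun (MJMt Λ hη) k) l
  have lhs : (Mat Λ * J m * (Mat Λ)ᵀ) k l = ∑ i, Mat Λ k i * dsgn i * Mat Λ l i := by
    rw [Matrix.mul_apply]
    refine Finset.sum_congr rfl fun i _ => ?_
    rw [J, Matrix.mul_diagonal, Matrix.transpose_apply]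
  rw [lhs, Fin.sum_univ_succ] at h
  have e0 : dsgn (m := m) 0 = -1 := rfl
  have es : ∀ j : Fin m, dsgn (m := m) j.succ = 1 := fun j => if_neg (Fin.succ_ne_zero j)
  simp only [e0, es, mul_one, mul_neg_one, neg_mul] at h
  rw [h, J, Matrix.diagonal_apply]

/-- Entry version of `MtJM`. -/
lemma MtJM_entry (hη : ∀ p q, eta (Λ p) (Λ q) = eta p q) (k l : Fin (m+1)) :
    -(Mat Λ 0 k * Mat Λ 0 l) + ∑ j : Fin m, Mat Λ j.succ k * Mat Λ j.succ l
      = if k = l then dsgn k else 0 := by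
  have h := congrFun (congrFun (MtJM Λ hη) k) l
  have lhs : ((Mat Λ)ᵀ * J m * Mat Λ) k l = ∑ i, Mat Λ i k * dsgn i * Mat Λ i l := by
    rw [Matrix.mul_assoc, Matrix.mul_apply]
    refine Finset.sum_congr rfl fun i _ => ?_
    rw [J, Matrix.diagonal_mul, Matrix.transpose_apply]
    ring
  rw [lhs, Fin.sum_univ_succ] at h
  have e0 : dsgn (m := m) 0 = -1 := rfl
  have es : ∀ j : Fin m, dsgn (m := m) j.succ = 1 := fun j => if_neg (Fin.succ_ne_zero j)
  simp only [e0, es, mul_one, mul_neg_one, neg_mul] at h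
  rw [h, J, Matrix.diagonal_apply]


section Det

/-- spatial block of the Lorentz matrix -/
def Ablk (Λ : EuclideanSpace ℝ (Fin (m+1)) →ₗ[ℝ] EuclideanSpace ℝ (Fin (m+1))) :
    Matrix (Fin m) (Fin m) ℝ := Matrix.of fun i j => Mat Λ i.succ j.succ

/-- the Jacobian matrix of the shell map -/
def Nmat (Λ : EuclideanSpace ℝ (Fin (m+1)) →ₗ[ℝ] EuclideanSpace ℝ (Fin (m+1)))
    (r : ℝ) (v : EuclideanSpace ℝ (Fin m)) : Matrix (Fin m) (Fin m) ℝ :=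
  Matrix.of fun i j => Mat Λ i.succ j.succ + Mat Λ i.succ 0 * v j / omg r v

lemma eta_bas_zero : eta ((bas (m+1)) 0) ((bas (m+1)) 0) = -1 := by
  rw [eta_eq_sum]
  simp only [bas_coord]
  rw [Finset.sum_eq_single 0]
  · simp [dsgn]
  · intro i _ hi; simp [hi]
  · intro h; exact absurd (Finset.mem_univ 0) h

lemma a_pos (horth : ∀ p, eta p p < 0 → 0 < p 0 → 0 < (Λ p) 0) : 0 < Mat Λ 0 0 := by
  have h1 : eta ((bas (m+1)) 0) ((bas (m+1)) 0) < 0 := by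
    rw [eta_bas_zero]; norm_num
  have h2 : (0:ℝ) < ((bas (m+1)) 0) 0 := by rw [bas_coord]; norm_num
  have := horth _ h1 h2
  rwa [mat_apply]

lemma rel_R4 (hη : ∀ p q, eta (Λ p) (Λ q) = eta p q) :
    Mat Λ 0 0 ^ 2 = 1 + ∑ j : Fin m, Mat Λ j.succ 0 ^ 2 := by
  have h := MtJM_entry Λ hη 0 0
  simp only [if_pos rfl, if_true] at h
  have hd : dsgn (m := m) 0 = -1 := rfl
  rw [hd] at h
  have he : ∀ j : Fin m, Mat Λ j.succ 0 * Mat Λ j.succ 0 = Mat Λ j.succ 0 ^ 2 :=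
    fun j => (sq _).symm
  rw [Finset.sum_congr rfl (fun j _ => he j)] at h
  nlinarith [h]

lemma rel_R1 (hη : ∀ p q, eta (Λ p) (Λ q) = eta p q) (i : Fin m) :
    ∑ j : Fin m, Mat Λ i.succ j.succ * Mat Λ 0 j.succ = Mat Λ 0 0 * Mat Λ i.succ 0 := by
  have h := MJMt_entry Λ hη i.succ 0
  rw [if_neg (Fin.succ_ne_zero i)] at h
  linarith [h]

lemma rel_R3 (hη : ∀ p q, eta (Λ p) (Λ q) = eta p q) : Ablk Λ * (Ablk Λ)ᵀ
    = 1 + Matrix.replicateCol Unit (fun i : Fin m => Mat Λ i.succ 0) * Matrix.replicateRow Unit (fun i : Fin m => Mat Λ i.succ 0) := by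
  ext i k
  have h := MJMt_entry Λ hη i.succ k.succ
  have hd : dsgn (m := m) i.succ = 1 := if_neg (Fin.succ_ne_zero i)
  rw [hd] at h
  rw [Matrix.mul_apply]
  have lhs : ∑ j, Ablk Λ i j * (Ablk Λ)ᵀ j k
      = ∑ j : Fin m, Mat Λ i.succ j.succ * Mat Λ k.succ j.succ := by
    refine Finset.sum_congr rfl fun j _ => ?_
    rw [Matrix.transpose_apply]; rfl
  rw [lhs]
  have rhs : ((1 + Matrix.replicateCol Unit (fun i : Fin m => Mat Λ i.succ 0) * Matrix.replicateRow Unit (fun i : Fin m => Mat Λ i.succ 0) :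
        Matrix (Fin m) (Fin m) ℝ)) i k
      = (if i = k then 1 else 0) + Mat Λ i.succ 0 * Mat Λ k.succ 0 := by
    rw [Matrix.add_apply, Matrix.one_apply]
    congr 1
    rw [Matrix.mul_apply]
    simp [Matrix.replicateCol_apply, Matrix.replicateRow_apply]
  rw [rhs]
  rcases eq_or_ne i k with rfl | hik'
  · rw [if_pos rfl] at h ⊢
    linarith [h]
  · rw [if_neg hik']
    rw [if_neg (fun hc => hik' (Fin.succ_inj.mp hc))] at h
    linarith [h]

lemma abs_detA (hη : ∀ p q, eta (Λ p) (Λ q) = eta p q)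
    (horth : ∀ p, eta p p < 0 → 0 < p 0 → 0 < (Λ p) 0) :
    |(Ablk Λ (m := m)).det| = Mat Λ 0 0 := by
  have h : (Ablk Λ (m := m)).det ^ 2 = Mat Λ 0 0 ^ 2 := by
    have h1 := congrArg Matrix.det (rel_R3 Λ hη)
    rw [Matrix.det_mul, Matrix.det_transpose, Matrix.det_one_add_replicateCol_mul_replicateRow] at h1
    rw [← sq] at h1
    rw [h1, rel_R4 Λ hη]
    congr 1
    rw [dotProduct]
    exact Finset.sum_congr rfl fun j _ => (sq _).symm
  have h2 : |(Ablk Λ (m := m)).det| ^ 2 = Mat Λ 0 0 ^ 2 := by rwa [sq_abs]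
  have ha := a_pos Λ horth
  have h3 := abs_nonneg (Ablk Λ (m := m)).det
  have h4 : (|(Ablk Λ (m := m)).det| - Mat Λ 0 0) * (|(Ablk Λ (m := m)).det| + Mat Λ 0 0) = 0 := by
    linear_combination h2
  rcases mul_eq_zero.mp h4 with h5 | h5
  · linarith
  · linarith

lemma omg'_eq {r : ℝ} (v : EuclideanSpace ℝ (Fin m)) :
    Λ (embed r v) 0 = Mat Λ 0 0 * omg r v + ∑ j : Fin m, Mat Λ 0 j.succ * v j := by
  rw [apply_eq, Fin.sum_univ_succ]
  rfl

lemma omg'_pos {r : ℝ} (hr : 0 < r) (v : EuclideanSpace ℝ (Fin m))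
    (horth : ∀ p, eta p p < 0 → 0 < p 0 → 0 < (Λ p) 0) :
    0 < Λ (embed r v) 0 := by
  refine horth _ ?_ ?_
  · rw [eta_embed_self hr]; linarith
  · exact omg_pos hr v

lemma Nmat_factor {r : ℝ} (hr : 0 < r) (v : EuclideanSpace ℝ (Fin m))
    (hη : ∀ p q, eta (Λ p) (Λ q) = eta p q)
    (horth : ∀ p, eta p p < 0 → 0 < p 0 → 0 < (Λ p) 0) :
    Nmat Λ r v = Ablk Λ *
      (1 + Matrix.replicateCol Unit (fun j : Fin m => Mat Λ 0 j.succ / Mat Λ 0 0) *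
        Matrix.replicateRow Unit (fun j : Fin m => v j / omg r v)) := by
  have ha := a_pos Λ horth
  have hω := omg_pos hr v
  ext i j
  rw [Matrix.mul_add, Matrix.add_apply, Matrix.mul_one]
  have h1 : (Ablk Λ * (Matrix.replicateCol Unit (fun j : Fin m => Mat Λ 0 j.succ / Mat Λ 0 0) *
      Matrix.replicateRow Unit (fun j : Fin m => v j / omg r v))) i j
      = (∑ k : Fin m, Mat Λ i.succ k.succ * Mat Λ 0 k.succ) * (v j / omg r v) / Mat Λ 0 0 := by
    have e1 : ∀ k : Fin m, (Matrix.replicateCol Unit (fun j : Fin m => Mat Λ 0 j.succ / Mat Λ 0 0) *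
        Matrix.replicateRow Unit (fun j : Fin m => v j / omg r v)) k j
        = Mat Λ 0 k.succ / Mat Λ 0 0 * (v j / omg r v) := by
      intro k
      rw [Matrix.mul_apply, Finset.univ_unique, Finset.sum_singleton, Matrix.replicateCol_apply,
        Matrix.replicateRow_apply]
    rw [Matrix.mul_apply]
    simp only [e1]
    simp only [div_eq_mul_inv]
    rw [Finset.sum_mul, Finset.sum_mul]
    refine Finset.sum_congr rfl fun k _ => ?_
    simp only [Ablk, Matrix.of_apply]
    ring
  rw [h1, rel_R1 Λ hη i]
  show Mat Λ i.succ j.succ + Mat Λ i.succ 0 * v j / omg r v = _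
  simp only [Ablk, Matrix.of_apply]
  congr 1
  have ha' : Mat Λ 0 0 ≠ 0 := ha.ne'
  have hω' : omg r v ≠ 0 := hω.ne'
  field_simp
  try ring

lemma abs_det_Nmat {r : ℝ} (hr : 0 < r) (v : EuclideanSpace ℝ (Fin m))
    (hη : ∀ p q, eta (Λ p) (Λ q) = eta p q)
    (horth : ∀ p, eta p p < 0 → 0 < p 0 → 0 < (Λ p) 0) :
    |(Nmat Λ r v).det| = Λ (embed r v) 0 / omg r v := by
  have ha := a_pos Λ horth
  have hω := omg_pos hr v
  have hω' := omg'_pos Λ hr v horth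
  have hdet : (Nmat Λ r v).det = (Ablk Λ).det *
      (1 + (fun j : Fin m => v j / omg r v) ⬝ᵥ (fun j : Fin m => Mat Λ 0 j.succ / Mat Λ 0 0)) := by
    rw [Nmat_factor Λ hr v hη horth, Matrix.det_mul, Matrix.det_one_add_replicateCol_mul_replicateRow]
  have hval : 1 + (fun j : Fin m => v j / omg r v) ⬝ᵥ (fun j : Fin m => Mat Λ 0 j.succ / Mat Λ 0 0)
      = Λ (embed r v) 0 / (Mat Λ 0 0 * omg r v) := by
    rw [omg'_eq, dotProduct]
    rw [add_div]
    have e1 : Mat Λ 0 0 * omg r v / (Mat Λ 0 0 * omg r v) = 1 := by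
      field_simp
    rw [e1, Finset.sum_div]
    congr 1
    refine Finset.sum_congr rfl fun j _ => ?_
    field_simp
  rw [hdet, hval, abs_mul, abs_detA Λ hη horth]
  rw [abs_of_pos (by positivity)]
  field_simp
end Det



section Calc

open ContinuousLinearMap

/-- `(t, w) ↦ Fin.cons t w` as a continuous linear map. -/
def consCLM : (ℝ × EuclideanSpace ℝ (Fin m)) →L[ℝ] EuclideanSpace ℝ (Fin (m+1)) :=
  LinearMap.toContinuousLinearMap
  { toFun := fun tw => WithLp.toLp 2 (Fin.cons tw.1 (WithLp.ofLp tw.2) : Fin (m+1) → ℝ)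
    map_add' := by
      intro x y
      ext i
      exact Fin.cases rfl (fun j => rfl) i
    map_smul' := by
      intro c x
      ext i
      exact Fin.cases rfl (fun j => rfl) i }

lemma consCLM_apply (t : ℝ) (w : EuclideanSpace ℝ (Fin m)) :
    consCLM (t, w) = WithLp.toLp 2 (Fin.cons t (WithLp.ofLp w) : Fin (m+1) → ℝ) := rfl

/-- Drop the zeroth coordinate, as a continuous linear map. -/
def projCLM : EuclideanSpace ℝ (Fin (m+1)) →L[ℝ] EuclideanSpace ℝ (Fin m) :=
  LinearMap.toContinuousLinearMap
  { toFun := fun p => WithLp.toLp 2 (fun i : Fin m => p i.succ)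
    map_add' := by intro x y; rfl
    map_smul' := by intro c x; rfl }

lemma projCLM_apply (p : EuclideanSpace ℝ (Fin (m+1))) (i : Fin m) :
    projCLM p i = p i.succ := rfl

/-- Derivative of `omg r` at `v`. -/
def Domg (r : ℝ) (v : EuclideanSpace ℝ (Fin m)) : EuclideanSpace ℝ (Fin m) →L[ℝ] ℝ :=
  (1 / (2 * omg r v)) • ((fderivInnerCLM ℝ (v, v)).comp
    ((ContinuousLinearMap.id ℝ _).prod (ContinuousLinearMap.id ℝ _)))

lemma Domg_apply {r : ℝ} (hr : 0 < r) (v w : EuclideanSpace ℝ (Fin m)) :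
    Domg r v w = ⟪v, w⟫ / omg r v := by
  have hω := omg_pos hr v
  rw [Domg]
  simp only [ContinuousLinearMap.smul_apply, ContinuousLinearMap.comp_apply,
    ContinuousLinearMap.prod_apply, ContinuousLinearMap.id_apply, fderivInnerCLM_apply]
  rw [real_inner_comm w v]
  field_simp
  ring
  rw [mul_comm (omg r v), mul_inv_cancel_right₀ hω.ne']

lemma hasFDerivAt_omg {r : ℝ} (hr : 0 < r) (v : EuclideanSpace ℝ (Fin m)) :
    HasFDerivAt (omg r) (Domg r v) v := by
  have hω := omg_pos hr v
  have h1 : HasFDerivAt (fun x : EuclideanSpace ℝ (Fin m) => ⟪x, x⟫ + r)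
      ((fderivInnerCLM ℝ (v, v)).comp
        ((ContinuousLinearMap.id ℝ _).prod (ContinuousLinearMap.id ℝ _))) v :=
    ((hasFDerivAt_id v).inner ℝ (hasFDerivAt_id v)).add_const r
  have hx : ⟪v, v⟫ + r ≠ 0 := by
    rw [real_inner_self_eq_norm_sq]; positivity
  have h2 := (Real.hasDerivAt_sqrt hx).comp_hasFDerivAt v h1
  have h3 : (fun x : EuclideanSpace ℝ (Fin m) => Real.sqrt (⟪x, x⟫ + r)) = omg r := by
    funext x
    rw [omg, real_inner_self_eq_norm_sq]
  rw [← h3]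
  refine h2.congr_fderiv ?_
  rw [Domg]
  congr 1
  rw [real_inner_self_eq_norm_sq]
  rw [omg]

end Calc


section Shell

def shellMap (Λ : EuclideanSpace ℝ (Fin (m+1)) →ₗ[ℝ] EuclideanSpace ℝ (Fin (m+1)))
    (r : ℝ) (v : EuclideanSpace ℝ (Fin m)) : EuclideanSpace ℝ (Fin m) :=
  projCLM (Λ (embed r v))

lemma shellMap_apply (r : ℝ) (v : EuclideanSpace ℝ (Fin m)) (i : Fin m) :
    shellMap Λ r v i = Λ (embed r v) i.succ := rfl

def Dphi (Λ : EuclideanSpace ℝ (Fin (m+1)) →ₗ[ℝ] EuclideanSpace ℝ (Fin (m+1)))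
    (r : ℝ) (v : EuclideanSpace ℝ (Fin m)) :
    EuclideanSpace ℝ (Fin m) →L[ℝ] EuclideanSpace ℝ (Fin m) :=
  ((projCLM.comp (LinearMap.toContinuousLinearMap Λ)).comp consCLM).comp
    ((Domg r v).prod (ContinuousLinearMap.id ℝ _))

lemma hasFDerivAt_shellMap {r : ℝ} (hr : 0 < r) (v : EuclideanSpace ℝ (Fin m)) :
    HasFDerivAt (shellMap Λ r) (Dphi Λ r v) v := by
  have h0 : HasFDerivAt (fun v : EuclideanSpace ℝ (Fin m) => (omg r v, v))
      ((Domg r v).prod (ContinuousLinearMap.id ℝ _)) v :=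
    HasFDerivAt.prodMk (hasFDerivAt_omg hr v) (hasFDerivAt_id v)
  exact (((projCLM.comp (LinearMap.toContinuousLinearMap Λ)).comp
    consCLM).hasFDerivAt).comp v h0

lemma inner_bas (v : EuclideanSpace ℝ (Fin m)) (j : Fin m) : ⟪v, (bas m) j⟫ = v j := by
  rw [PiLp.inner_apply]
  have : ∀ i, ⟪v i, ((bas m) j) i⟫ = v i * (if i = j then 1 else 0) := by
    intro i; rw [bas_coord, Real.inner_apply]
  rw [Finset.sum_congr rfl fun i _ => this i]
  simp

lemma toMatrix_Dphi {r : ℝ} (hr : 0 < r) (v : EuclideanSpace ℝ (Fin m)) :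
    LinearMap.toMatrix (bas m) (bas m) ((Dphi Λ r v : EuclideanSpace ℝ (Fin m) →L[ℝ]
      EuclideanSpace ℝ (Fin m)) : EuclideanSpace ℝ (Fin m) →ₗ[ℝ] EuclideanSpace ℝ (Fin m))
      = Nmat Λ r v := by
  ext i j
  rw [LinearMap.toMatrix_apply]
  have e1 : ((bas m).repr (Dphi Λ r v ((bas m) j))) i = (Dphi Λ r v ((bas m) j)) i := by
    rw [bas, PiLp.basisFun_repr]
  rw [ContinuousLinearMap.coe_coe, e1]
  have e2 : Dphi Λ r v ((bas m) j)
      = projCLM (Λ (WithLp.toLp 2 (Fin.cons (Domg r v ((bas m) j)) (WithLp.ofLp ((bas m) j)) : Fin (m+1) → ℝ))) := rfl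
  rw [e2, projCLM_apply, apply_eq, Fin.sum_univ_succ]
  rw [Domg_apply hr, inner_bas]
  have e3 : ∀ k : Fin m, WithLp.ofLp (WithLp.toLp 2 (Fin.cons (v j / omg r v) (WithLp.ofLp ((bas m) j)) : Fin (m+1) → ℝ)) k.succ
      = if k = j then 1 else 0 := by
    intro k
    have : WithLp.ofLp (WithLp.toLp 2 (Fin.cons (v j / omg r v) (WithLp.ofLp ((bas m) j)) : Fin (m+1) → ℝ)) k.succ
        = ((bas m) j) k := rfl
    rw [this, bas_coord]
  have e4 : WithLp.ofLp (WithLp.toLp 2 (Fin.cons (v j / omg r v) (WithLp.ofLp ((bas m) j)) : Fin (m+1) → ℝ)) 0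
      = v j / omg r v := rfl
  rw [e4]
  rw [Finset.sum_congr rfl fun k _ => by rw [e3 k]]
  simp only [mul_ite, mul_one, mul_zero]
  rw [Finset.sum_ite_eq' Finset.univ j (fun k => Mat Λ i.succ k.succ)]
  simp only [Finset.mem_univ, if_true]
  show _ = Mat Λ i.succ j.succ + Mat Λ i.succ 0 * v j / omg r v
  ring

lemma det_Dphi {r : ℝ} (hr : 0 < r) (v : EuclideanSpace ℝ (Fin m)) :
    (Dphi Λ r v).det = (Nmat Λ r v).det := by
  rw [ContinuousLinearMap.det, ← LinearMap.det_toMatrix (bas m), toMatrix_Dphi Λ hr v]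

end Shell


section Bij

lemma lambda_embed {r : ℝ} (hr : 0 < r)
    (hη : ∀ p q, eta (Λ p) (Λ q) = eta p q)
    (horth : ∀ p, eta p p < 0 → 0 < p 0 → 0 < (Λ p) 0)
    (v : EuclideanSpace ℝ (Fin m)) :
    Λ (embed r v) = embed r (shellMap Λ r v) := by
  have h1 : eta (Λ (embed r v)) (Λ (embed r v)) = -r := by
    rw [hη, eta_embed_self hr]
  have h2 : 0 < Λ (embed r v) 0 := omg'_pos Λ hr v horth
  have h3 := eq_embed_of_shell hr _ h1 h2
  rw [h3]
  rfl

lemma eta_neg_neg (p : EuclideanSpace ℝ (Fin (m+1))) : eta (-p) (-p) = eta p p := by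
  have hc : ∀ i, (-p : EuclideanSpace ℝ (Fin (m+1))) i = -(p i) := fun i => rfl
  simp only [eta, hc]
  have h : ∀ x : Fin m, -p x.succ * -p x.succ = p x.succ * p x.succ := fun x => by ring
  rw [Finset.sum_congr rfl fun x _ => h x]
  ring

lemma lambda_inj (hη : ∀ p q, eta (Λ p) (Λ q) = eta p q) : Function.Injective Λ := by
  rw [← LinearMap.ker_eq_bot]
  refine LinearMap.ker_eq_bot'.mpr fun p hp => ?_
  set q : EuclideanSpace ℝ (Fin (m+1)) :=
    WithLp.toLp 2 (Fin.cons (-(p 0)) (fun j => p j.succ) : Fin (m+1) → ℝ) with hq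
  have h1 : eta p q = 0 := by
    rw [← hη p q, hp]
    have hz : ∀ i, (Λ q) i * (0 : EuclideanSpace ℝ (Fin (m+1))) i = 0 := fun i => by
      show _ * (0:ℝ) = 0; ring
    simp only [eta]
    have h0 : (0 : EuclideanSpace ℝ (Fin (m+1))) 0 = 0 := rfl
    have hs : ∀ j : Fin m, (0 : EuclideanSpace ℝ (Fin (m+1))) j.succ = 0 := fun _ => rfl
    simp [h0, hs]
  have h2 : p 0 ^ 2 + ∑ j : Fin m, p j.succ ^ 2 = 0 := by
    have hq0 : q 0 = -(p 0) := rfl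
    have hqs : ∀ j : Fin m, q j.succ = p j.succ := fun j => rfl
    rw [eta, hq0] at h1
    rw [Finset.sum_congr rfl (fun j _ => by rw [hqs j])] at h1
    have : ∀ j : Fin m, p j.succ * p j.succ = p j.succ ^ 2 := fun j => (sq _).symm
    rw [Finset.sum_congr rfl (fun j _ => this j)] at h1
    nlinarith [h1]
  have hnn : ∀ j : Fin m, (0:ℝ) ≤ p j.succ ^ 2 := fun j => sq_nonneg _
  have hsum : ∑ j : Fin m, p j.succ ^ 2 = 0 := by
    nlinarith [Finset.sum_nonneg (fun j (_ : j ∈ Finset.univ) => hnn j), sq_nonneg (p 0)]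
  have h0 : p 0 = 0 := by
    nlinarith [Finset.sum_nonneg (fun j (_ : j ∈ Finset.univ) => hnn j)]
  have hall : ∀ j : Fin m, p j.succ = 0 := by
    intro j
    have := (Finset.sum_eq_zero_iff_of_nonneg
      (fun j (_ : j ∈ Finset.univ) => hnn j)).mp hsum j (Finset.mem_univ j)
    nlinarith [this, sq_nonneg (p j.succ), sq_abs (p j.succ), abs_nonneg (p j.succ)]
  ext i
  refine Fin.cases ?_ (fun j => ?_) i
  · exact h0
  · exact hall j

lemma shellMap_inj {r : ℝ} (hr : 0 < r)
    (hη : ∀ p q, eta (Λ p) (Λ q) = eta p q)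
    (horth : ∀ p, eta p p < 0 → 0 < p 0 → 0 < (Λ p) 0) :
    Function.Injective (shellMap Λ r) := by
  intro v w h
  have h1 : Λ (embed r v) = Λ (embed r w) := by
    rw [lambda_embed Λ hr hη horth, lambda_embed Λ hr hη horth, h]
  have h2 := lambda_inj Λ hη h1
  ext j
  have hv : v j = embed r v j.succ := rfl
  have hw : w j = embed r w j.succ := rfl
  rw [hv, hw, h2]

lemma shellMap_surj {r : ℝ} (hr : 0 < r)
    (hη : ∀ p q, eta (Λ p) (Λ q) = eta p q)
    (horth : ∀ p, eta p p < 0 → 0 < p 0 → 0 < (Λ p) 0) :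
    Function.Surjective (shellMap Λ r) := by
  intro w
  obtain ⟨p, hp⟩ := (LinearMap.injective_iff_surjective.mp (lambda_inj Λ hη)) (embed r w)
  have hpp : eta p p = -r := by
    rw [← hη p p, hp, eta_embed_self hr]
  have hp0ne : p 0 ≠ 0 := by
    intro hz
    have : -(p 0 * p 0) + ∑ j : Fin m, p j.succ * p j.succ = -r := hpp
    rw [hz] at this
    have hge : (0:ℝ) ≤ ∑ j : Fin m, p j.succ * p j.succ :=
      Finset.sum_nonneg (fun j _ => mul_self_nonneg _)
    nlinarith [this]
  have hp0 : 0 < p 0 := by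
    rcases lt_or_gt_of_ne hp0ne with hlt | hgt
    · exfalso
      have hneg : eta (-p) (-p) < 0 := by rw [eta_neg_neg, hpp]; linarith
      have hpos : 0 < (-p : EuclideanSpace ℝ (Fin (m+1))) 0 := by
        show 0 < -(p 0); linarith
      have := horth (-p) hneg hpos
      rw [map_neg] at this
      have hc : (-(Λ p) : EuclideanSpace ℝ (Fin (m+1))) 0 = -(Λ p 0) := rfl
      rw [hc, hp] at this
      have : (0:ℝ) < -(omg r w) := this
      have := omg_pos hr w
      linarith
    · exact hgt
  refine ⟨WithLp.toLp 2 (fun j : Fin m => p j.succ), ?_⟩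
  have hpe := eq_embed_of_shell hr p hpp hp0
  ext j
  rw [shellMap_apply, ← hpe, hp]
  rfl

end Bij


section Meas

lemma continuous_shellMap {r : ℝ} (hr : 0 < r) : Continuous (shellMap Λ r) :=
  continuous_iff_continuousAt.mpr fun v => (hasFDerivAt_shellMap Λ hr v).continuousAt

lemma continuous_embed {r : ℝ} (hr : 0 < r) : Continuous (embed r (m := m)) := by
  have h : Continuous (omg r (m := m)) := continuous_iff_continuousAt.mpr fun v =>
    (hasFDerivAt_omg hr v).continuousAt
  have he : (embed r (m := m)) = fun v => consCLM (omg r v, v) := rfl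
  rw [he]
  exact consCLM.continuous.comp (h.prodMk continuous_id)

lemma integrand_eq {r : ℝ} (hr : 0 < r)
    (hη : ∀ p q, eta (Λ p) (Λ q) = eta p q)
    (horth : ∀ p, eta p p < 0 → 0 < p 0 → 0 < (Λ p) 0)
    (x : EuclideanSpace ℝ (Fin m)) :
    ENNReal.ofReal |(Dphi Λ r x).det| * ENNReal.ofReal ((2 * omg r (shellMap Λ r x))⁻¹)
      = ENNReal.ofReal ((2 * omg r x)⁻¹) := by
  have hdet : |(Dphi Λ r x).det| = omg r (shellMap Λ r x) / omg r x := by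
    rw [det_Dphi Λ hr x, abs_det_Nmat Λ hr x hη horth, lambda_embed Λ hr hη horth x]
    rfl
  rw [← ENNReal.ofReal_mul (abs_nonneg _), hdet]
  congr 1
  have hω := omg_pos hr x
  have hω' := omg_pos hr (shellMap Λ r x)
  have h1 : omg r x ≠ 0 := hω.ne'
  have h2 : omg r (shellMap Λ r x) ≠ 0 := hω'.ne'
  field_simp

lemma map_shellMap {r : ℝ} (hr : 0 < r)
    (hη : ∀ p q, eta (Λ p) (Λ q) = eta p q)
    (horth : ∀ p, eta p p < 0 → 0 < p 0 → 0 < (Λ p) 0) :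
    Measure.map (shellMap Λ r) (volume.withDensity fun v => ENNReal.ofReal ((2 * omg r v)⁻¹))
      = volume.withDensity fun v => ENNReal.ofReal ((2 * omg r v)⁻¹) := by
  have hφm : Measurable (shellMap Λ r) := (continuous_shellMap Λ hr).measurable
  refine Measure.ext fun s hs => ?_
  rw [Measure.map_apply hφm hs, withDensity_apply _ (hφm hs), withDensity_apply _ hs]
  have himg : shellMap Λ r '' (shellMap Λ r ⁻¹' s) = s :=
    Set.image_preimage_eq s (shellMap_surj Λ hr hη horth)
  conv_rhs => rw [← himg]
  rw [lintegral_image_eq_lintegral_abs_det_fderiv_mul volume (hφm hs)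
    (fun x _ => (hasFDerivAt_shellMap Λ hr x).hasFDerivWithinAt)
    ((shellMap_inj Λ hr hη horth).injOn) _]
  refine setLIntegral_congr_fun_ae (hφm hs) ?_
  exact Filter.Eventually.of_forall fun x _ => (integrand_eq Λ hr hη horth x).symm

end Meas

end MassShellAux

open MassShellAux in
/-- Lorentz invariance of the forward mass-shell measure. -/
theorem statement0 (m : ℕ) (hm : 1 ≤ m) (r : ℝ) (hr : 0 < r)
    (Λ : EuclideanSpace ℝ (Fin (m + 1)) →ₗ[ℝ] EuclideanSpace ℝ (Fin (m + 1)))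
    (hη : ∀ p q, eta (Λ p) (Λ q) = eta p q)
    (horth : ∀ p, eta p p < 0 → 0 < p 0 → 0 < (Λ p) 0) :
    Measure.map (⇑Λ) (massShellMeasure m r) = massShellMeasure m r := by
  have hφm : Measurable (shellMap Λ r) := (continuous_shellMap Λ hr).measurable
  have hem : Measurable (embed r (m := m)) := (continuous_embed hr).measurable
  have hΛm : Measurable (⇑Λ) := Λ.continuous_of_finiteDimensional.measurable
  rw [massShellMeasure, Measure.map_map hΛm hem]
  have hcomp : ⇑Λ ∘ embed r = embed r ∘ shellMap Λ r :=
    funext fun v => lambda_embed Λ hr hη horth v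
  rw [hcomp, ← Measure.map_map hem hφm, map_shellMap Λ hr hη horth]
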